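/- For every coherent word P_1…P_n of starters and terminators there is a coherent word Q_1…Q_n such that Q_1 = P_1 and, for all i = 2,…,n, P_i ≅ Q_i and T_{Q_{i−1}} = S_{Q_i} = Q_{i−1} ∩ Q_i (equality on the overlapping events). -/

import Mathlib

set_option maxHeartbeats 1000000

universe u v w

/-- An ipomset over event universe `E` and alphabet `A`:
a finite set of events with a precedence order `lt`, an event order `evord`,
source and target sets, and a labeling. -/
structure Ipomset (E : Type u) (A : Type v) where
  events : Finset E
  lt : E → E → Prop
  evord : E → E → Prop
  src : Finset E
  tgt : Finset E
  lab : E → A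
  lt_mem : ∀ {x y}, lt x y → x ∈ events ∧ y ∈ events
  evord_mem : ∀ {x y}, evord x y → x ∈ events ∧ y ∈ events
  lt_irrefl : ∀ x, ¬ lt x x
  lt_trans : ∀ {x y z}, lt x y → lt y z → lt x z
  evord_irrefl : ∀ x, ¬ evord x x
  evord_trans : ∀ {x y z}, evord x y → evord y z → evord x z
  order_total : ∀ {x y}, x ∈ events → y ∈ events → x ≠ y →
      lt x y ∨ lt y x ∨ evord x y ∨ evord y x
  src_sub : src ⊆ events
  tgt_sub : tgt ⊆ events
  src_min : ∀ {x y}, x ∈ src → ¬ lt y x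
  tgt_max : ∀ {x y}, x ∈ tgt → ¬ lt x y

namespace Ipomset

variable {E : Type u} {A : Type v}

/-- An ipomset is interval if its precedence order admits an interval representation. -/
def Interval (P : Ipomset E A) : Prop :=
  ∃ b e : E → ℝ, (∀ x ∈ P.events, b x ≤ e x) ∧
    ∀ x ∈ P.events, ∀ y ∈ P.events, (P.lt x y ↔ e x < b y)

/-- Discrete: empty precedence order. -/
def Discrete (P : Ipomset E A) : Prop := ∀ x y, ¬ P.lt x y

/-- A starter is a discrete ipomset with `tgt = events`. -/
def Starter (P : Ipomset E A) : Prop := P.Discrete ∧ P.tgt = P.events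

/-- A terminator is a discrete ipomset with `src = events`. -/
def Terminator (P : Ipomset E A) : Prop := P.Discrete ∧ P.src = P.events

/-- An identity is a discrete ipomset with `src = tgt = events`. -/
def IsIdentity (P : Ipomset E A) : Prop :=
  P.Discrete ∧ P.src = P.events ∧ P.tgt = P.events

end Ipomset

/-- A conclist: a finite set with a strict total order (the event order) and labeling. -/
structure Conclist (E : Type u) (A : Type v) where
  events : Finset E
  evord : E → E → Prop
  lab : E → Option A
  evord_mem : ∀ {x y}, evord x y → x ∈ events ∧ y ∈ events
  evord_irrefl : ∀ x, ¬ evord x x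
  evord_trans : ∀ {x y z}, evord x y → evord y z → evord x z
  evord_total : ∀ {x y}, x ∈ events → y ∈ events → x ≠ y → evord x y ∨ evord y x

variable {E : Type u} {A : Type v}

/-- The source interface of an ipomset: the conclist on its source set. -/
def Ipomset.srcIface [DecidableEq E] (P : Ipomset E A) : Conclist E A where
  events := P.src
  evord x y := x ∈ P.src ∧ y ∈ P.src ∧ P.evord x y
  lab x := if x ∈ P.src then some (P.lab x) else none
  evord_mem h := ⟨h.1, h.2.1⟩
  evord_irrefl x h := P.evord_irrefl x h.2.2
  evord_trans h1 h2 := ⟨h1.1, h2.2.1, P.evord_trans h1.2.2 h2.2.2⟩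
  evord_total {x y} hx hy hxy := by
    rcases P.order_total (P.src_sub hx) (P.src_sub hy) hxy with h | h | h | h
    · exact absurd h (P.src_min hy)
    · exact absurd h (P.src_min hx)
    · exact Or.inl ⟨hx, hy, h⟩
    · exact Or.inr ⟨hy, hx, h⟩

/-- The target interface of an ipomset: the conclist on its target set. -/
def Ipomset.tgtIface [DecidableEq E] (P : Ipomset E A) : Conclist E A where
  events := P.tgt
  evord x y := x ∈ P.tgt ∧ y ∈ P.tgt ∧ P.evord x y
  lab x := if x ∈ P.tgt then some (P.lab x) else none
  evord_mem h := ⟨h.1, h.2.1⟩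
  evord_irrefl x h := P.evord_irrefl x h.2.2
  evord_trans h1 h2 := ⟨h1.1, h2.2.1, P.evord_trans h1.2.2 h2.2.2⟩
  evord_total {x y} hx hy hxy := by
    rcases P.order_total (P.tgt_sub hx) (P.tgt_sub hy) hxy with h | h | h | h
    · exact absurd h (P.tgt_max hx)
    · exact absurd h (P.tgt_max hy)
    · exact Or.inl ⟨hx, hy, h⟩
    · exact Or.inr ⟨hy, hx, h⟩

/-- `f` is an isomorphism of ipomsets from `P` to `Q`. -/
structure IsIpoIso (P Q : Ipomset E A) (f : E → E) : Prop where
  maps : ∀ x ∈ P.events, f x ∈ Q.events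
  inj : ∀ x ∈ P.events, ∀ y ∈ P.events, f x = f y → x = y
  surj : ∀ y ∈ Q.events, ∃ x ∈ P.events, f x = y
  src_iff : ∀ x ∈ P.events, (x ∈ P.src ↔ f x ∈ Q.src)
  tgt_iff : ∀ x ∈ P.events, (x ∈ P.tgt ↔ f x ∈ Q.tgt)
  lab_eq : ∀ x ∈ P.events, Q.lab (f x) = P.lab x
  lt_iff : ∀ x ∈ P.events, ∀ y ∈ P.events, (Q.lt (f x) (f y) ↔ P.lt x y)
  evord_iff : ∀ x ∈ P.events, ∀ y ∈ P.events, ¬ P.lt x y → ¬ P.lt y x →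
      (P.evord x y ↔ Q.evord (f x) (f y))

/-- `P ≅ Q`: there is an isomorphism of ipomsets from `P` to `Q`. -/
def IpoIso (P Q : Ipomset E A) : Prop := ∃ f, IsIpoIso P Q f

/-- `f` is a subsumption of ipomsets from `P` to `Q`. -/
structure IsSubsumption (P Q : Ipomset E A) (f : E → E) : Prop where
  maps : ∀ x ∈ P.events, f x ∈ Q.events
  inj : ∀ x ∈ P.events, ∀ y ∈ P.events, f x = f y → x = y
  surj : ∀ y ∈ Q.events, ∃ x ∈ P.events, f x = y
  src_iff : ∀ x ∈ P.events, (x ∈ P.src ↔ f x ∈ Q.src)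
  tgt_iff : ∀ x ∈ P.events, (x ∈ P.tgt ↔ f x ∈ Q.tgt)
  lab_eq : ∀ x ∈ P.events, Q.lab (f x) = P.lab x
  lt_imp : ∀ x ∈ P.events, ∀ y ∈ P.events, Q.lt (f x) (f y) → P.lt x y
  evord_imp : ∀ x ∈ P.events, ∀ y ∈ P.events, ¬ P.lt x y → ¬ P.lt y x →
      P.evord x y → Q.evord (f x) (f y)

/-- `P ⊑ Q`: there is a subsumption from `P` to `Q`. -/
def Subsumes (P Q : Ipomset E A) : Prop := ∃ f, IsSubsumption P Q f

/-- `P ⊏ Q`: `P ⊑ Q` and `P` and `Q` are not isomorphic. -/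
def StrictSubsumes (P Q : Ipomset E A) : Prop := Subsumes P Q ∧ ¬ IpoIso P Q

/-- `f` is an isomorphism of conclists from `U` to `V`. -/
structure IsClIso (U V : Conclist E A) (f : E → E) : Prop where
  maps : ∀ x ∈ U.events, f x ∈ V.events
  inj : ∀ x ∈ U.events, ∀ y ∈ U.events, f x = f y → x = y
  surj : ∀ y ∈ V.events, ∃ x ∈ U.events, f x = y
  lab_eq : ∀ x ∈ U.events, V.lab (f x) = U.lab x
  evord_iff : ∀ x ∈ U.events, ∀ y ∈ U.events, (U.evord x y ↔ V.evord (f x) (f y))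

/-- `U ≅ V` for conclists. -/
def ClIso (U V : Conclist E A) : Prop := ∃ f, IsClIso U V f

/-- `P` and `Q` are composable representatives: the target interface of `P` coincides
with the source interface of `Q` and is exactly the overlap of the event sets. -/
def Composable [DecidableEq E] (P Q : Ipomset E A) : Prop :=
  P.tgtIface = Q.srcIface ∧ P.events ∩ Q.events = P.tgt

/-- One step of the glued precedence order. -/
def glueStep (P Q : Ipomset E A) (x y : E) : Prop :=
  P.lt x y ∨ Q.lt x y ∨
    (x ∈ P.events ∧ x ∉ P.tgt ∧ y ∈ Q.events ∧ y ∉ Q.src)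

/-- The glued precedence order: transitive closure. -/
def glueLt (P Q : Ipomset E A) : E → E → Prop :=
  Relation.TransGen (glueStep P Q)

/-- The glued event order: the union of the two event orders. -/
def glueEvord (P Q : Ipomset E A) (x y : E) : Prop :=
  P.evord x y ∨ Q.evord x y

/-- `R` is the gluing of the composable representatives `P` and `Q`. -/
def IsGlueOf [DecidableEq E] (P Q R : Ipomset E A) : Prop :=
  Composable P Q ∧
  R.events = P.events ∪ Q.events ∧
  (∀ x y, R.lt x y ↔ glueLt P Q x y) ∧
  (∀ x y, R.evord x y ↔ glueEvord P Q x y) ∧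
  R.src = P.src ∧ R.tgt = Q.tgt ∧
  (∀ x ∈ P.events, R.lab x = P.lab x) ∧
  (∀ x ∈ Q.events, R.lab x = Q.lab x)

/-- `R ≅ P * Q`: up to isomorphism, `R` is the gluing of `P` and `Q`. -/
def IsGluing [DecidableEq E] (P Q R : Ipomset E A) : Prop :=
  ∃ P' Q' R', IpoIso P P' ∧ IpoIso Q Q' ∧ IpoIso R R' ∧ IsGlueOf P' Q' R'

/-- A letter of a step sequence: a starter or a terminator. -/
def StepLetter (P : Ipomset E A) : Prop := P.Starter ∨ P.Terminator

/-- A word of starters and terminators is coherent if consecutive interfaces match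
(as isomorphism classes of conclists). -/
def Coherent [DecidableEq E] (w : List (Ipomset E A)) : Prop :=
  (∀ P ∈ w, StepLetter P) ∧
  w.Chain' (fun P Q => ClIso P.tgtIface Q.srcIface)

/-- The congruence `~` on coherent words: generated by composing two subsequent
starters or two subsequent terminators, removing/inserting identities, and
replacing letters by isomorphic ones. -/
inductive StepEquiv {E : Type u} {A : Type v} [DecidableEq E] :
    List (Ipomset E A) → List (Ipomset E A) → Prop
  | glue (u v : List (Ipomset E A)) (P Q R : Ipomset E A) :
      Coherent (u ++ P :: Q :: v) →
      ((P.Starter ∧ Q.Starter) ∨ (P.Terminator ∧ Q.Terminator)) →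
      IsGluing P Q R →
      StepEquiv (u ++ P :: Q :: v) (u ++ R :: v)
  | ident (u v : List (Ipomset E A)) (P : Ipomset E A) :
      Coherent (u ++ P :: v) → P.IsIdentity → u ++ v ≠ [] →
      StepEquiv (u ++ P :: v) (u ++ v)
  | iso (u v : List (Ipomset E A)) (P Q : Ipomset E A) :
      Coherent (u ++ P :: v) → IpoIso P Q →
      StepEquiv (u ++ P :: v) (u ++ Q :: v)
  | refl (w : List (Ipomset E A)) : StepEquiv w w
  | symm {w₁ w₂ : List (Ipomset E A)} : StepEquiv w₁ w₂ → StepEquiv w₂ w₁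
  | trans {w₁ w₂ w₃ : List (Ipomset E A)} :
      StepEquiv w₁ w₂ → StepEquiv w₂ w₃ → StepEquiv w₁ w₃

/-- `R` is (up to isomorphism) the gluing `P₁ * ⋯ * Pₙ` of the word `w = P₁ ⋯ Pₙ`. -/
inductive GlueWord {E : Type u} {A : Type v} [DecidableEq E] :
    List (Ipomset E A) → Ipomset E A → Prop
  | single (P : Ipomset E A) : GlueWord [P] P
  | cons (P : Ipomset E A) (w : List (Ipomset E A)) (R S : Ipomset E A) :
      GlueWord w R → IsGluing P R S → GlueWord (P :: w) S

/-- The discrete ipomset on sub-conclist `V` of the discrete ipomset `W`,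
with sources `S` and targets `T`. -/
def letterOf [DecidableEq E] (W : Ipomset E A) (hW : W.Discrete)
    (V S T : Finset E) : Ipomset E A where
  events := V ∩ W.events
  lt _ _ := False
  evord x y := x ∈ V ∩ W.events ∧ y ∈ V ∩ W.events ∧ W.evord x y
  src := S ∩ (V ∩ W.events)
  tgt := T ∩ (V ∩ W.events)
  lab := W.lab
  lt_mem h := h.elim
  evord_mem h := ⟨h.1, h.2.1⟩
  lt_irrefl _ h := h
  lt_trans h := h.elim
  evord_irrefl x h := W.evord_irrefl x h.2.2
  evord_trans h1 h2 := ⟨h1.1, h2.2.1, W.evord_trans h1.2.2 h2.2.2⟩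
  order_total {x y} hx hy hxy := by
    rcases W.order_total (Finset.mem_inter.mp hx).2 (Finset.mem_inter.mp hy).2 hxy
      with h | h | h | h
    · exact absurd h (hW _ _)
    · exact absurd h (hW _ _)
    · exact Or.inr (Or.inr (Or.inl ⟨hx, hy, h⟩))
    · exact Or.inr (Or.inr (Or.inr ⟨hy, hx, h⟩))
  src_sub := Finset.inter_subset_right
  tgt_sub := Finset.inter_subset_right
  src_min _ h := h
  tgt_max _ h := h

/-- `V↑B`: the starter on the conclist `V` (inside `W`) starting the events of `B`. -/
def upOn [DecidableEq E] (W : Ipomset E A) (hW : W.Discrete) (V B : Finset E) :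
    Ipomset E A :=
  letterOf W hW V (V \ B) V

/-- `V↓B`: the terminator on the conclist `V` (inside `W`) terminating the events of `B`. -/
def downOn [DecidableEq E] (W : Ipomset E A) (hW : W.Discrete) (V B : Finset E) :
    Ipomset E A :=
  letterOf W hW V V (V \ B)

/-- The transposition relation: `TranspAt w w'` holds iff `w' = τᵢ(w)` for some `i`. -/
inductive TranspAt {E : Type u} {A : Type v} [DecidableEq E] :
    List (Ipomset E A) → List (Ipomset E A) → Prop
  | ss (u v : List (Ipomset E A)) (W : Ipomset E A) (hW : W.Discrete)
      (Aa Bb : Finset E) (hA : Aa ⊆ W.events) (hB : Bb ⊆ W.events)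
      (hd : Disjoint Aa Bb) :
      TranspAt (u ++ upOn W hW (W.events \ Bb) Aa :: upOn W hW W.events Bb :: v)
               (u ++ upOn W hW (W.events \ Aa) Bb :: upOn W hW W.events Aa :: v)
  | tt (u v : List (Ipomset E A)) (W : Ipomset E A) (hW : W.Discrete)
      (Aa Bb : Finset E) (hA : Aa ⊆ W.events) (hB : Bb ⊆ W.events)
      (hd : Disjoint Aa Bb) :
      TranspAt (u ++ downOn W hW W.events Aa :: downOn W hW (W.events \ Aa) Bb :: v)
               (u ++ downOn W hW W.events Bb :: downOn W hW (W.events \ Bb) Aa :: v)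
  | st (u v : List (Ipomset E A)) (W : Ipomset E A) (hW : W.Discrete)
      (Aa Bb : Finset E) (hA : Aa ⊆ W.events) (hB : Bb ⊆ W.events)
      (hd : Disjoint Aa Bb) :
      TranspAt (u ++ upOn W hW W.events Aa :: downOn W hW W.events Bb :: v)
               (u ++ downOn W hW (W.events \ Aa) Bb :: upOn W hW (W.events \ Bb) Aa :: v)
  | ts (u v : List (Ipomset E A)) (W : Ipomset E A) (hW : W.Discrete)
      (Aa Bb : Finset E) (hA : Aa ⊆ W.events) (hB : Bb ⊆ W.events)
      (hd : Disjoint Aa Bb) :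
      TranspAt (u ++ downOn W hW (W.events \ Bb) Aa :: upOn W hW (W.events \ Aa) Bb :: v)
               (u ++ upOn W hW W.events Bb :: downOn W hW W.events Aa :: v)

/-- A word is dense if every letter starts or terminates exactly one event. -/
def DenseWord [DecidableEq E] (w : List (Ipomset E A)) : Prop :=
  ∀ P ∈ w, (P.Starter ∧ (P.events \ P.src).card = 1) ∨
    (P.Terminator ∧ (P.events \ P.tgt).card = 1)

/-- There is a chain of transpositions from `w₁` to `w₂` through dense coherent words
all satisfying `pred`. -/
def TranspChain [DecidableEq E] (pred : List (Ipomset E A) → Prop)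
    (w₁ w₂ : List (Ipomset E A)) : Prop :=
  ∃ us : List (List (Ipomset E A)),
    us.head? = some w₁ ∧ us.getLast? = some w₂ ∧
    us.Chain' TranspAt ∧ ∀ u ∈ us, DenseWord u ∧ Coherent u ∧ pred u

/-- A word is sparse if it is a single identity, or its letters are non-identity
starters and terminators which strictly alternate. -/
def SparseWord [DecidableEq E] (w : List (Ipomset E A)) : Prop :=
  (∃ P, w = [P] ∧ P.IsIdentity) ∨
  ((∀ P ∈ w, StepLetter P ∧ ¬ P.IsIdentity) ∧
    w.Chain' (fun P Q => (P.Starter ∧ Q.Terminator) ∨ (P.Terminator ∧ Q.Starter)))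

/-- `w` is THE sparse step decomposition of `P` (up to the chosen representatives). -/
def SparseDecomp [DecidableEq E] (P : Ipomset E A) (w : List (Ipomset E A)) : Prop :=
  SparseWord w ∧ Coherent w ∧ ∃ R, GlueWord w R ∧ IpoIso R P

/-- The transposition exchanging a starter followed by a terminator
(third case of the definition of transpositions): `TranspST w tw` iff `tw = τᵢ(w)`
where the `i`-th factor of `w` is `U↑A · U↓B`. -/
def TranspST [DecidableEq E] (w tw : List (Ipomset E A)) : Prop :=
  ∃ (u v : List (Ipomset E A)) (W : Ipomset E A) (hW : W.Discrete)
    (Aa Bb : Finset E), Aa ⊆ W.events ∧ Bb ⊆ W.events ∧ Disjoint Aa Bb ∧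
    w = u ++ upOn W hW W.events Aa :: downOn W hW W.events Bb :: v ∧
    tw = u ++ downOn W hW (W.events \ Aa) Bb :: upOn W hW (W.events \ Bb) Aa :: v

/-- `w₂ <ₑ w₁` on step sequences: some representative of `w₂` is obtained from a
representative of `w₁` by a starter-terminator transposition. -/
def LtE [DecidableEq E] (w₂ w₁ : List (Ipomset E A)) : Prop :=
  ∃ w₁' w₂', StepEquiv w₁ w₁' ∧ StepEquiv w₂ w₂' ∧ TranspST w₁' w₂'

/-- `≤`: the reflexive-transitive closure of `<ₑ` on step sequences. -/
def StepLe [DecidableEq E] (w₁ w₂ : List (Ipomset E A)) : Prop :=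
  Relation.ReflTransGen (fun x y => LtE x y ∨ StepEquiv x y) w₁ w₂

/-- A higher-dimensional automaton: cells labelled by conclists (identity ipomsets),
face maps satisfying the precubical identities, start and accept cells. -/
structure HDA (X : Type w) (E : Type u) (A : Type v) [DecidableEq E] where
  ev : X → Ipomset E A
  ev_id : ∀ q, (ev q).IsIdentity
  face : Bool → Finset E → X → X
  face_ev : ∀ (b : Bool) (B : Finset E) (q : X), B ⊆ (ev q).events →
    ev (face b B q) =
      letterOf (ev q) (ev_id q).1 ((ev q).events \ B) ((ev q).events \ B)
        ((ev q).events \ B)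
  face_comm : ∀ (b c : Bool) (B C : Finset E) (q : X), Disjoint B C →
    B ⊆ (ev q).events → C ⊆ (ev q).events →
    face b B (face c C q) = face c C (face b B q)
  start : Set X
  accept : Set X

/-- Paths in an HDA, together with their event words (interleaving identities). -/
inductive HPath {X : Type w} {E : Type u} {A : Type v} [DecidableEq E]
    (H : HDA X E A) : X → X → List (Ipomset E A) → Prop
  | nil (q : X) : HPath H q q [H.ev q]
  | up (q p r : X) (w : List (Ipomset E A)) (B : Finset E)
      (hB : B ⊆ (H.ev p).events) :
      q = H.face false B p → HPath H p r w →
      HPath H q r (upOn (H.ev p) (H.ev_id p).1 (H.ev p).events B :: w)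
  | down (p q r : X) (w : List (Ipomset E A)) (B : Finset E)
      (hB : B ⊆ (H.ev p).events) :
      q = H.face true B p → HPath H q r w →
      HPath H p r (downOn (H.ev p) (H.ev_id p).1 (H.ev p).events B :: w)

/-- The language of an HDA: event ipomsets of accepting paths, closed under iso. -/
def HLang {X : Type w} [DecidableEq E] (H : HDA X E A) : Set (Ipomset E A) :=
  {P | ∃ q r w R, q ∈ H.start ∧ r ∈ H.accept ∧ HPath H q r w ∧
    GlueWord w R ∧ IpoIso R P}

/-- An ST-automaton: states labelled by conclists (identity ipomsets), edges labelled
by starters and terminators consistently with the state labels. -/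
structure STAut (Q : Type w) (E : Type u) (A : Type v) [DecidableEq E] where
  lab : Q → Ipomset E A
  lab_id : ∀ q, (lab q).IsIdentity
  edge : Q → Ipomset E A → Q → Prop
  edge_st : ∀ {q P r}, edge q P r → StepLetter P
  edge_src : ∀ {q P r}, edge q P r → P.srcIface = (lab q).srcIface
  edge_tgt : ∀ {q P r}, edge q P r → P.tgtIface = (lab r).srcIface
  start : Set Q
  accept : Set Q

/-- Paths in an ST-automaton together with their labels
`id_{λ(q₀)} P₁ id_{λ(q₁)} ⋯ Pₙ id_{λ(qₙ)}`. -/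
inductive STPath {Q : Type w} {E : Type u} {A : Type v} [DecidableEq E]
    (S : STAut Q E A) : Q → Q → List (Ipomset E A) → Prop
  | nil (q : Q) : STPath S q q [S.lab q]
  | cons (q p r : Q) (P : Ipomset E A) (w : List (Ipomset E A)) :
      S.edge q P p → STPath S p r w → STPath S q r (S.lab q :: P :: w)

/-- The language of an ST-automaton: the `~`-classes of labels of accepting paths
(as a `~`-saturated set of words). -/
def STLang {Q : Type w} [DecidableEq E] (S : STAut Q E A) :
    Set (List (Ipomset E A)) :=
  {w | ∃ q r w', q ∈ S.start ∧ r ∈ S.accept ∧ STPath S q r w' ∧ StepEquiv w w'}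

/-- `S` is the ST-automaton `ST(X)` associated to the HDA `H`. -/
def IsSTof {X : Type w} [DecidableEq E] (H : HDA X E A) (S : STAut X E A) : Prop :=
  S.lab = H.ev ∧ S.start = H.start ∧ S.accept = H.accept ∧
  ∀ q P r, S.edge q P r ↔
    ((∃ B, ∃ _ : B ⊆ (H.ev r).events, q = H.face false B r ∧
        P = upOn (H.ev r) (H.ev_id r).1 (H.ev r).events B) ∨
     (∃ B, ∃ _ : B ⊆ (H.ev q).events, r = H.face true B q ∧
        P = downOn (H.ev q) (H.ev_id q).1 (H.ev q).events B))

/-- The image of a set of ipomsets under `Φ` (sparse step decomposition),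
as a `~`-saturated set of words. -/
def PhiImage [DecidableEq E] (L : Set (Ipomset E A)) : Set (List (Ipomset E A)) :=
  {w | ∃ P ∈ L, ∃ w', SparseDecomp P w' ∧ StepEquiv w w'}

/-- The image of a set of words under `Ψ` (gluing), as an iso-saturated set of ipomsets. -/
def PsiImage [DecidableEq E] (L : Set (List (Ipomset E A))) : Set (Ipomset E A) :=
  {P | ∃ w ∈ L, ∃ R, GlueWord w R ∧ IpoIso R P}

/-- `H` together with `ι` realizes the HDA `HD(S)` obtained from the ST-automaton `S`:
cells of `S` embed via `ι` compatibly with labels, start/accept cells, and each edge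
of `S` is realized by a face map of `H`. -/
def SimulatesST {Q : Type w} {X : Type w} [DecidableEq E]
    (S : STAut Q E A) (H : HDA X E A) (ι : Q → X) : Prop :=
  (∀ q, H.ev (ι q) = S.lab q) ∧
  (∀ q ∈ S.start, ι q ∈ H.start) ∧
  (∀ q ∈ S.accept, ι q ∈ H.accept) ∧
  ∀ q P r, S.edge q P r →
    ((∃ B, ∃ _ : B ⊆ (H.ev (ι r)).events, ι q = H.face false B (ι r) ∧
        P = upOn (H.ev (ι r)) (H.ev_id (ι r)).1 (H.ev (ι r)).events B) ∨
     (∃ B, ∃ _ : B ⊆ (H.ev (ι q)).events, ι r = H.face true B (ι q) ∧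
        P = downOn (H.ev (ι q)) (H.ev_id (ι q)).1 (H.ev (ι q)).events B))

section MyAux

variable {E : Type u} {A : Type v}

lemma myClIso_refl (U : Conclist E A) : ClIso U U :=
  ⟨id, { maps := fun _ hx => hx, inj := fun _ _ _ _ h => h,
         surj := fun y hy => ⟨y, hy, rfl⟩, lab_eq := fun _ _ => rfl,
         evord_iff := fun _ _ _ _ => Iff.rfl }⟩

lemma myClIso_of_eq {U V : Conclist E A} (h : U = V) : ClIso U V := h ▸ myClIso_refl U

lemma myIpoIso_refl (P : Ipomset E A) : IpoIso P P :=
  ⟨id, { maps := fun _ hx => hx, inj := fun _ _ _ _ h => h,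
         surj := fun y hy => ⟨y, hy, rfl⟩,
         src_iff := fun _ _ => Iff.rfl, tgt_iff := fun _ _ => Iff.rfl,
         lab_eq := fun _ _ => rfl,
         lt_iff := fun _ _ _ _ => Iff.rfl,
         evord_iff := fun _ _ _ _ _ _ => Iff.rfl }⟩

lemma myClIso_symm {U V : Conclist E A} : ClIso U V → ClIso V U := by
  rintro ⟨f, hf⟩
  classical
  set g : E → E := fun y => if hy : ∃ x ∈ U.events, f x = y then hy.choose else y with hg
  have key : ∀ y ∈ V.events, g y ∈ U.events ∧ f (g y) = y := by
    intro y hy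
    have hex : ∃ x ∈ U.events, f x = y := hf.surj y hy
    simp only [hg, dif_pos hex]
    exact ⟨hex.choose_spec.1, hex.choose_spec.2⟩
  refine ⟨g, ?_, ?_, ?_, ?_, ?_⟩
  · exact fun y hy => (key y hy).1
  · intro y hy y' hy' h
    have := congrArg f h
    rw [(key y hy).2, (key y' hy').2] at this
    exact this
  · intro x hx
    refine ⟨f x, hf.maps x hx, ?_⟩
    have h1 := key (f x) (hf.maps x hx)
    exact hf.inj _ h1.1 _ hx h1.2
  · intro y hy
    have := hf.lab_eq (g y) (key y hy).1
    rw [(key y hy).2] at this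
    exact this.symm
  · intro y hy y' hy'
    have := hf.evord_iff (g y) (key y hy).1 (g y') (key y' hy').1
    rw [(key y hy).2, (key y' hy').2] at this
    exact this.symm

lemma myClIso_trans {U V W : Conclist E A} : ClIso U V → ClIso V W → ClIso U W := by
  rintro ⟨f, hf⟩ ⟨g, hg⟩
  refine ⟨g ∘ f, ?_, ?_, ?_, ?_, ?_⟩
  · exact fun x hx => hg.maps _ (hf.maps x hx)
  · exact fun x hx y hy h => hf.inj x hx y hy
      (hg.inj _ (hf.maps x hx) _ (hf.maps y hy) h)
  · intro z hz
    obtain ⟨y, hy, rfl⟩ := hg.surj z hz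
    obtain ⟨x, hx, rfl⟩ := hf.surj y hy
    exact ⟨x, hx, rfl⟩
  · intro x hx
    rw [Function.comp_apply, hg.lab_eq _ (hf.maps x hx), hf.lab_eq x hx]
  · intro x hx y hy
    exact (hf.evord_iff x hx y hy).trans (hg.evord_iff _ (hf.maps x hx) _ (hf.maps y hy))

lemma Conclist.ext' {U V : Conclist E A} (h1 : U.events = V.events)
    (h2 : U.evord = V.evord) (h3 : U.lab = V.lab) : U = V := by
  cases U; cases V
  dsimp at h1 h2 h3
  subst h1; subst h2; subst h3
  rfl

/-- An ipomset isomorphism between discrete ipomsets restricts to a conclist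
isomorphism of target interfaces. -/
lemma myTgtClIso [DecidableEq E] {P Q : Ipomset E A} {f : E → E}
    (hf : IsIpoIso P Q f) (hP : P.Discrete) : ClIso P.tgtIface Q.tgtIface := by
  refine ⟨f, ?_, ?_, ?_, ?_, ?_⟩
  · intro x hx
    exact (hf.tgt_iff x (P.tgt_sub hx)).mp hx
  · intro x hx y hy h
    exact hf.inj x (P.tgt_sub hx) y (P.tgt_sub hy) h
  · intro y hy
    obtain ⟨x, hx, rfl⟩ := hf.surj y (Q.tgt_sub hy)
    exact ⟨x, (hf.tgt_iff x hx).mpr hy, rfl⟩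
  · intro x hx
    have hx' : x ∈ P.tgt := hx
    have hfx : f x ∈ Q.tgt := (hf.tgt_iff x (P.tgt_sub hx)).mp hx
    show (if f x ∈ Q.tgt then some (Q.lab (f x)) else none)
      = (if x ∈ P.tgt then some (P.lab x) else none)
    rw [if_pos hfx, if_pos hx', hf.lab_eq x (P.tgt_sub hx)]
  · intro x hx y hy
    have hx' := P.tgt_sub hx
    have hy' := P.tgt_sub hy
    constructor
    · rintro ⟨_, _, h⟩
      exact ⟨(hf.tgt_iff x hx').mp hx, (hf.tgt_iff y hy').mp hy,
        (hf.evord_iff x hx' y hy' (hP x y) (hP y x)).mp h⟩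
    · rintro ⟨_, _, h⟩
      exact ⟨hx, hy, (hf.evord_iff x hx' y hy' (hP x y) (hP y x)).mpr h⟩

/-- Fresh elements avoiding a finite set. -/
lemma myExists_fresh [DecidableEq E] [Infinite E] (D F : Finset E) :
    ∃ j : E → E, (∀ x ∈ D, j x ∉ F) ∧ ∀ x ∈ D, ∀ y ∈ D, j x = j y → x = y := by
  classical
  have hinf : ((↑F : Set E)ᶜ).Infinite := F.finite_toSet.infinite_compl
  have : Infinite ((↑F : Set E)ᶜ : Set E) := hinf.to_subtype
  let emb : {x // x ∈ D} ↪ ((↑F : Set E)ᶜ : Set E) :=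
    ((Fintype.equivFin {x // x ∈ D}).toEmbedding.trans Fin.valEmbedding).trans
      (Infinite.natEmbedding _)
  refine ⟨fun x => if hx : x ∈ D then (emb ⟨x, hx⟩ : E) else x, ?_, ?_⟩
  · intro x hx
    simp only [dif_pos hx]
    have h2 := (emb ⟨x, hx⟩).2
    exact fun hmem => h2 (Finset.mem_coe.mpr hmem)
  · intro x hx y hy h
    simp only [dif_pos hx, dif_pos hy] at h
    have := emb.injective (Subtype.ext h)
    exact congrArg Subtype.val this

/-- Pushforward of an ipomset along a map with a left inverse on its events. -/
def pushf [DecidableEq E] (P : Ipomset E A) (g h : E → E)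
    (hinv : ∀ x ∈ P.events, h (g x) = x) : Ipomset E A where
  events := P.events.image g
  lt x y := ∃ a ∈ P.events, ∃ b ∈ P.events, g a = x ∧ g b = y ∧ P.lt a b
  evord x y := ∃ a ∈ P.events, ∃ b ∈ P.events, g a = x ∧ g b = y ∧ P.evord a b
  src := P.src.image g
  tgt := P.tgt.image g
  lab x := P.lab (h x)
  lt_mem := by
    rintro x y ⟨a, ha, b, hb, rfl, rfl, _⟩
    exact ⟨Finset.mem_image_of_mem g ha, Finset.mem_image_of_mem g hb⟩
  evord_mem := by
    rintro x y ⟨a, ha, b, hb, rfl, rfl, _⟩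
    exact ⟨Finset.mem_image_of_mem g ha, Finset.mem_image_of_mem g hb⟩
  lt_irrefl := by
    rintro x ⟨a, ha, b, hb, rfl, hgb, hlt⟩
    have : b = a := by rw [← hinv a ha, ← hinv b hb, hgb]
    exact P.lt_irrefl a (this ▸ hlt)
  lt_trans := by
    rintro x y z ⟨a, ha, b, hb, rfl, rfl, hab⟩ ⟨b', hb', c, hc, hgb', rfl, hbc⟩
    have : b' = b := by rw [← hinv b hb, ← hinv b' hb', hgb']
    exact ⟨a, ha, c, hc, rfl, rfl, P.lt_trans hab (this ▸ hbc)⟩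
  evord_irrefl := by
    rintro x ⟨a, ha, b, hb, rfl, hgb, hlt⟩
    have : b = a := by rw [← hinv a ha, ← hinv b hb, hgb]
    exact P.evord_irrefl a (this ▸ hlt)
  evord_trans := by
    rintro x y z ⟨a, ha, b, hb, rfl, rfl, hab⟩ ⟨b', hb', c, hc, hgb', rfl, hbc⟩
    have : b' = b := by rw [← hinv b hb, ← hinv b' hb', hgb']
    exact ⟨a, ha, c, hc, rfl, rfl, P.evord_trans hab (this ▸ hbc)⟩
  order_total := by
    intro x y hx hy hxy
    obtain ⟨a, ha, rfl⟩ := Finset.mem_image.mp hx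
    obtain ⟨b, hb, rfl⟩ := Finset.mem_image.mp hy
    have hab : a ≠ b := fun h => hxy (by rw [h])
    rcases P.order_total ha hb hab with h | h | h | h
    · exact Or.inl ⟨a, ha, b, hb, rfl, rfl, h⟩
    · exact Or.inr (Or.inl ⟨b, hb, a, ha, rfl, rfl, h⟩)
    · exact Or.inr (Or.inr (Or.inl ⟨a, ha, b, hb, rfl, rfl, h⟩))
    · exact Or.inr (Or.inr (Or.inr ⟨b, hb, a, ha, rfl, rfl, h⟩))
  src_sub := Finset.image_subset_image P.src_sub
  tgt_sub := Finset.image_subset_image P.tgt_sub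
  src_min := by
    rintro x y hx ⟨a, ha, b, hb, rfl, hgb, hlt⟩
    obtain ⟨c, hc, hgc⟩ := Finset.mem_image.mp hx
    have : b = c := by
      rw [← hinv b hb, ← hinv c (P.src_sub hc), hgb, hgc]
    exact P.src_min (this ▸ hc) hlt
  tgt_max := by
    rintro x y hx ⟨a, ha, b, hb, hga, rfl, hlt⟩
    obtain ⟨c, hc, hgc⟩ := Finset.mem_image.mp hx
    have : a = c := by
      rw [← hinv a ha, ← hinv c (P.tgt_sub hc), hga, hgc]
    exact P.tgt_max (this ▸ hc) hlt

lemma pushf_iso [DecidableEq E] (P : Ipomset E A) (g h : E → E)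
    (hinv : ∀ x ∈ P.events, h (g x) = x) : IsIpoIso P (pushf P g h hinv) g := by
  have ginj : ∀ x ∈ P.events, ∀ y ∈ P.events, g x = g y → x = y := by
    intro x hx y hy hxy
    rw [← hinv x hx, ← hinv y hy, hxy]
  refine ⟨?_, ginj, ?_, ?_, ?_, ?_, ?_, ?_⟩
  · exact fun x hx => Finset.mem_image_of_mem g hx
  · intro y hy
    obtain ⟨x, hx, rfl⟩ := Finset.mem_image.mp hy
    exact ⟨x, hx, rfl⟩
  · intro x hx
    constructor
    · exact fun hs => Finset.mem_image_of_mem g hs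
    · intro hs
      obtain ⟨c, hc, hgc⟩ := Finset.mem_image.mp hs
      exact (ginj c (P.src_sub hc) x hx hgc) ▸ hc
  · intro x hx
    constructor
    · exact fun hs => Finset.mem_image_of_mem g hs
    · intro hs
      obtain ⟨c, hc, hgc⟩ := Finset.mem_image.mp hs
      exact (ginj c (P.tgt_sub hc) x hx hgc) ▸ hc
  · intro x hx
    show P.lab (h (g x)) = P.lab x
    rw [hinv x hx]
  · intro x hx y hy
    constructor
    · rintro ⟨a, ha, b, hb, hga, hgb, hlt⟩
      rw [ginj a ha x hx hga, ginj b hb y hy hgb] at hlt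
      exact hlt
    · exact fun hlt => ⟨x, hx, y, hy, rfl, rfl, hlt⟩
  · intro x hx y hy _ _
    constructor
    · exact fun hlt => ⟨x, hx, y, hy, rfl, rfl, hlt⟩
    · rintro ⟨a, ha, b, hb, hga, hgb, hlt⟩
      rw [ginj a ha x hx hga, ginj b hb y hy hgb] at hlt
      exact hlt

lemma pushf_discrete [DecidableEq E] {P : Ipomset E A} {g h : E → E}
    {hinv : ∀ x ∈ P.events, h (g x) = x} (hP : P.Discrete) :
    (pushf P g h hinv).Discrete := by
  rintro x y ⟨a, _, b, _, _, _, hlt⟩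
  exact hP a b hlt

end MyAux


section MyStep

variable {E : Type u} {A : Type v}

lemma myStep [DecidableEq E] [Infinite E] (Q P : Ipomset E A) (hP : P.Discrete)
    (φ : ClIso P.srcIface Q.tgtIface) :
    ∃ (P' : Ipomset E A) (g : E → E), IsIpoIso P P' g ∧ P'.Discrete ∧
      (P.tgt = P.events → P'.tgt = P'.events) ∧
      (P.src = P.events → P'.src = P'.events) ∧
      P'.srcIface = Q.tgtIface ∧ Q.events ∩ P'.events = Q.tgt := by
  classical
  obtain ⟨f, hf⟩ := φ
  obtain ⟨j, hjF, hjinj⟩ := myExists_fresh (E := E) (P.events \ P.src) Q.events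
  set g : E → E := fun x => if x ∈ P.src then f x else j x with hgdef
  have hgsrc : ∀ x ∈ P.src, g x = f x := fun x hx => if_pos hx
  have hfmem : ∀ x ∈ P.src, f x ∈ Q.tgt := fun x hx => hf.maps x hx
  have hnon : ∀ x ∈ P.events, x ∉ P.src → g x ∉ Q.events := by
    intro x hx hxs
    have : g x = j x := if_neg hxs
    rw [this]
    exact hjF x (Finset.mem_sdiff.mpr ⟨hx, hxs⟩)
  have ginj : ∀ x ∈ P.events, ∀ y ∈ P.events, g x = g y → x = y := by
    intro x hx y hy hxy
    by_cases hxs : x ∈ P.src <;> by_cases hys : y ∈ P.src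
    · rw [hgsrc x hxs, hgsrc y hys] at hxy
      exact hf.inj x hxs y hys hxy
    · exfalso
      rw [hgsrc x hxs] at hxy
      exact hnon y hy hys (hxy ▸ Q.tgt_sub (hfmem x hxs))
    · exfalso
      rw [hgsrc y hys] at hxy
      exact hnon x hx hxs (hxy.symm ▸ Q.tgt_sub (hfmem y hys))
    · have hx' : x ∈ P.events \ P.src := Finset.mem_sdiff.mpr ⟨hx, hxs⟩
      have hy' : y ∈ P.events \ P.src := Finset.mem_sdiff.mpr ⟨hy, hys⟩
      have e1 : g x = j x := if_neg hxs
      have e2 : g y = j y := if_neg hys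
      rw [e1, e2] at hxy
      exact hjinj x hx' y hy' hxy
  set h : E → E := fun y => if hy : ∃ x ∈ P.events, g x = y then hy.choose else y with hhdef
  have hinv : ∀ x ∈ P.events, h (g x) = x := by
    intro x hx
    have hex : ∃ a ∈ P.events, g a = g x := ⟨x, hx, rfl⟩
    simp only [hhdef, dif_pos hex]
    exact ginj _ hex.choose_spec.1 x hx hex.choose_spec.2
  set P' : Ipomset E A := pushf P g h hinv with hP'def
  have hiso : IsIpoIso P P' g := pushf_iso P g h hinv
  -- P'.src = Q.tgt
  have hsrc_eq : P'.src = Q.tgt := by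
    ext y
    show y ∈ P.src.image g ↔ y ∈ Q.tgt
    constructor
    · rintro hy
      obtain ⟨a, ha, rfl⟩ := Finset.mem_image.mp hy
      rw [hgsrc a ha]
      exact hfmem a ha
    · intro hy
      obtain ⟨a, ha, rfl⟩ := hf.surj y hy
      exact Finset.mem_image.mpr ⟨a, ha, hgsrc a ha⟩
  have hgP' : ∀ a ∈ P.src, g a ∈ P'.src := by
    intro a ha
    exact Finset.mem_image_of_mem g ha
  refine ⟨P', g, hiso, pushf_discrete hP, ?_, ?_, ?_, ?_⟩
  · intro htgt
    show P.tgt.image g = P.events.image g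
    rw [htgt]
  · intro hsrc
    show P.src.image g = P.events.image g
    rw [hsrc]
  · -- srcIface equality
    refine Conclist.ext' ?_ ?_ ?_
    · exact hsrc_eq
    · funext x y
      apply propext
      show (x ∈ P'.src ∧ y ∈ P'.src ∧ P'.evord x y) ↔
        (x ∈ Q.tgt ∧ y ∈ Q.tgt ∧ Q.evord x y)
      constructor
      · rintro ⟨hx, hy, hxy⟩
        obtain ⟨a, ha, rfl⟩ := Finset.mem_image.mp hx
        obtain ⟨b, hb, rfl⟩ := Finset.mem_image.mp hy
        have ha' := P.src_sub ha
        have hb' := P.src_sub hb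
        have hev : P.evord a b :=
          (hiso.evord_iff a ha' b hb' (hP a b) (hP b a)).mpr hxy
        have := (hf.evord_iff a ha b hb).mp ⟨ha, hb, hev⟩
        rw [hgsrc a ha, hgsrc b hb]
        exact this
      · rintro ⟨hx, hy, hxy⟩
        obtain ⟨a, ha, rfl⟩ := hf.surj x hx
        obtain ⟨b, hb, rfl⟩ := hf.surj y hy
        have ha' := P.src_sub ha
        have hb' := P.src_sub hb
        have hev : P.evord a b :=
          ((hf.evord_iff a ha b hb).mpr ⟨hx, hy, hxy⟩).2.2
        have hxy' : P'.evord (g a) (g b) :=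
          (hiso.evord_iff a ha' b hb' (hP a b) (hP b a)).mp hev
        rw [← hgsrc a ha, ← hgsrc b hb]
        exact ⟨hgP' a ha, hgP' b hb, hxy'⟩
    · funext x
      show (if x ∈ P'.src then some (P'.lab x) else none)
        = (if x ∈ Q.tgt then some (Q.lab x) else none)
      rw [hsrc_eq]
      by_cases hx : x ∈ Q.tgt
      · rw [if_pos hx, if_pos hx]
        obtain ⟨a, ha, rfl⟩ := hf.surj x hx
        have hlab := hf.lab_eq a ha
        have hlab' : (if f a ∈ Q.tgt then some (Q.lab (f a)) else none)
            = (if a ∈ P.src then some (P.lab a) else none) := hlab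
        rw [if_pos hx, if_pos (show a ∈ P.src from ha)] at hlab'
        have h2 : P'.lab (f a) = P.lab a := by
          rw [← hgsrc a ha]
          exact hiso.lab_eq a (P.src_sub ha)
        rw [h2, Option.some_inj.mp hlab']
      · rw [if_neg hx, if_neg hx]
  · -- intersection
    ext x
    constructor
    · rintro hx
      obtain ⟨hxQ, hxP⟩ := Finset.mem_inter.mp hx
      obtain ⟨a, ha, rfl⟩ := Finset.mem_image.mp hxP
      by_cases hs : a ∈ P.src
      · rw [hgsrc a hs]
        exact hfmem a hs
      · exact absurd hxQ (hnon a ha hs)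
    · intro hx
      refine Finset.mem_inter.mpr ⟨Q.tgt_sub hx, ?_⟩
      rw [← hsrc_eq] at hx
      exact P'.src_sub hx

end MyStep


section MyMain

variable {E : Type u} {A : Type v}

lemma myAux [DecidableEq E] [Infinite E] (w : List (Ipomset E A)) :
    ∀ (P0 Q0 : Ipomset E A),
      (∀ P ∈ w, StepLetter P) →
      List.Chain (fun P Q => ClIso P.tgtIface Q.srcIface) P0 w →
      ClIso P0.tgtIface Q0.tgtIface →
      ∃ q, (∀ P ∈ q, StepLetter P) ∧ q.length = w.length ∧
        List.Chain (fun X Y => X.tgtIface = Y.srcIface ∧ X.events ∩ Y.events = X.tgt)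
          Q0 q ∧
        ∀ (i : ℕ) (h1 : i < w.length) (h2 : i < q.length),
          IpoIso (w.get ⟨i, h1⟩) (q.get ⟨i, h2⟩) := by
  induction w with
  | nil =>
    intro P0 Q0 _ _ _
    exact ⟨[], by simp, rfl, List.Chain.nil, fun i h1 => absurd h1 (Nat.not_lt_zero i)⟩
  | cons P w ih =>
    intro P0 Q0 hst hch hinv
    replace hch := List.chain_cons.mp hch
    have hstP : StepLetter P := hst P List.mem_cons_self
    have hPd : P.Discrete := by
      rcases hstP with ⟨hd, _⟩ | ⟨hd, _⟩ <;> exact hd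
    have φ : ClIso P.srcIface Q0.tgtIface :=
      myClIso_trans (myClIso_symm hch.1) hinv
    obtain ⟨P', g, hiso, hdisc, hT, hS, hsrcIf, hint⟩ := myStep Q0 P hPd φ
    have hinv' : ClIso P.tgtIface P'.tgtIface := myTgtClIso hiso hPd
    obtain ⟨q', hq'st, hq'len, hq'ch, hq'iso⟩ :=
      ih P P' (fun R hR => hst R (List.mem_cons_of_mem _ hR)) hch.2 hinv'
    refine ⟨P' :: q', ?_, by simp [hq'len], ?_, ?_⟩
    · intro R hR
      rcases List.mem_cons.mp hR with rfl | hR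
      · rcases hstP with ⟨_, ht⟩ | ⟨_, hs⟩
        · exact Or.inl ⟨hdisc, hT ht⟩
        · exact Or.inr ⟨hdisc, hS hs⟩
      · exact hq'st R hR
    · exact List.Chain.cons ⟨hsrcIf.symm, hint⟩ hq'ch
    · intro i h1 h2
      cases i with
      | zero => exact ⟨g, hiso⟩
      | succ n =>
        exact hq'iso n (Nat.lt_of_succ_lt_succ h1) (Nat.lt_of_succ_lt_succ h2)

end MyMain


/-- For every coherent word `P₁…Pₙ` of starters and terminators
there is a coherent word `Q₁…Qₙ` with `Q₁ = P₁`, `Pᵢ ≅ Qᵢ` for all `i`, and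
`T_{Qᵢ₋₁} = S_{Qᵢ} = Qᵢ₋₁ ∩ Qᵢ` (equality on the overlapping events). -/
theorem coherent_word_overlapping_representatives [DecidableEq E] [Infinite E]
    (w : List (Ipomset E A)) (hw : Coherent w) :
    ∃ q : List (Ipomset E A), Coherent q ∧ q.length = w.length ∧
      q.head? = w.head? ∧
      q.Chain' (fun X Y => X.tgtIface = Y.srcIface ∧ X.events ∩ Y.events = X.tgt) ∧
      ∀ (i : ℕ) (h1 : i < w.length) (h2 : i < q.length),
        IpoIso (w.get ⟨i, h1⟩) (q.get ⟨i, h2⟩) := by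
  classical
  obtain ⟨hst, hch⟩ := hw
  cases w with
  | nil =>
    exact ⟨[], ⟨by simp, List.isChain_nil⟩, rfl, rfl, List.isChain_nil,
      fun i h1 => absurd h1 (Nat.not_lt_zero i)⟩
  | cons P w' =>
    have hch' : List.Chain (fun X Y => ClIso X.tgtIface Y.srcIface) P w' := hch
    obtain ⟨q', hq'st, hq'len, hq'ch, hq'iso⟩ :=
      myAux w' P P (fun R hR => hst R (List.mem_cons_of_mem _ hR)) hch'
        (myClIso_refl _)
    refine ⟨P :: q', ⟨?_, ?_⟩, by simp [hq'len], rfl, hq'ch, ?_⟩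
    · intro R hR
      rcases List.mem_cons.mp hR with rfl | hR
      · exact hst R List.mem_cons_self
      · exact hq'st R hR
    · show List.Chain (fun X Y => ClIso X.tgtIface Y.srcIface) P q'
      exact List.Chain.imp (fun X Y hXY => myClIso_of_eq hXY.1) hq'ch
    · intro i h1 h2
      cases i with
      | zero => exact myIpoIso_refl P
      | succ n =>
        exact hq'iso n (Nat.lt_of_succ_lt_succ h1) (Nat.lt_of_succ_lt_succ h2)
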